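/- arXiv:1809.02314 — 2 statements merged into one kernel-verified Lean document; each statement's English description precedes it below -/
import Mathlib

section
/- Let s be a positive integer and m > 0, and suppose u is m-strongly concave on Ω_{2s}. Let Z, Z* ⊆ V with |Z| ≤ s and |Z*| ≤ s. Then f(Z*) − f(Z) ≤ (1/(2m))·‖(∇u(w^{(Z)}))_{Z* \ Z}‖² − (m/2)·‖(w^{(Z)})_{Z \ Z*}‖². -/
open scoped RealInnerProductSpace

/-- The support of a vector, as a finset. -/
noncomputable def suppF {V : Type*} [Fintype V] [DecidableEq V]
    (w : EuclideanSpace ℝ V) : Finset V :=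
  Finset.univ.filter fun a => w a ≠ 0

/-- The restriction `w_S` of a vector `w` to a set `S` of coordinates:
it agrees with `w` on `S` and is zero elsewhere. -/
noncomputable def restr {V : Type*} [Fintype V] [DecidableEq V]
    (w : EuclideanSpace ℝ V) (S : Finset V) : EuclideanSpace ℝ V :=
  WithLp.toLp 2 fun a => if a ∈ S then w a else 0

/-- if `u` is `m`-strongly concave on `Ω_{2s}` then for `|Z|, |Z*| ≤ s`,
`f(Z*) - f(Z) ≤ (1/(2m))‖(∇u(w^{(Z)}))_{Z* \ Z}‖² - (m/2)‖(w^{(Z)})_{Z \ Z*}‖²`. -/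
theorem stmt7 {V : Type*} [Fintype V] [DecidableEq V]
    (s : ℕ) (hs : 0 < s) (m : ℝ) (hm : 0 < m)
    (u : EuclideanSpace ℝ V → ℝ) (hu : Differentiable ℝ u)
    (hconc : ∀ x y : EuclideanSpace ℝ V,
      (suppF x).card ≤ 2 * s → (suppF y).card ≤ 2 * s → (suppF (x - y)).card ≤ 2 * s →
      u y - u x - ⟪gradient u x, y - x⟫ ≤ -(m / 2) * ‖y - x‖ ^ 2)
    (w : Finset V → EuclideanSpace ℝ V)
    (hw_supp : ∀ Z : Finset V, suppF (w Z) ⊆ Z)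
    (hw_max : ∀ Z : Finset V, ∀ z : EuclideanSpace ℝ V, suppF z ⊆ Z → u z ≤ u (w Z))
    (hw_grad : ∀ Z : Finset V, ∀ a ∈ Z, gradient u (w Z) a = 0)
    (Z Zstar : Finset V) (hZ : Z.card ≤ s) (hZstar : Zstar.card ≤ s) :
    (u (w Zstar) - u 0) - (u (w Z) - u 0) ≤
      (1 / (2 * m)) * ‖restr (gradient u (w Z)) (Zstar \ Z)‖ ^ 2
        - (m / 2) * ‖restr (w Z) (Z \ Zstar)‖ ^ 2 := by
  classical
  set x := w Z with hxdef
  set y := w Zstar with hydef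
  set g := gradient u x with hgdef
  have hxZ : ∀ a, a ∉ Z → x a = 0 := by
    intro a ha
    by_contra h
    exact ha (hw_supp Z (by simp [suppF]; exact h))
  have hyZ : ∀ a, a ∉ Zstar → y a = 0 := by
    intro a ha
    by_contra h
    exact ha (hw_supp Zstar (by simp [suppF]; exact h))
  have h1 : (suppF x).card ≤ 2 * s :=
    le_trans (le_trans (Finset.card_le_card (hw_supp Z)) hZ) (by omega)
  have h2 : (suppF y).card ≤ 2 * s :=
    le_trans (le_trans (Finset.card_le_card (hw_supp Zstar)) hZstar) (by omega)
  have hsub : suppF (x - y) ⊆ Z ∪ Zstar := by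
    intro a ha
    simp only [suppF, Finset.mem_filter, Finset.mem_univ, true_and] at ha
    by_contra h
    simp only [Finset.mem_union, not_or] at h
    apply ha
    have e1 := hxZ a h.1
    have e2 := hyZ a h.2
    show x a - y a = 0
    rw [e1, e2, sub_zero]
  have h3 : (suppF (x - y)).card ≤ 2 * s := by
    calc (suppF (x - y)).card ≤ (Z ∪ Zstar).card := Finset.card_le_card hsub
      _ ≤ Z.card + Zstar.card := Finset.card_union_le _ _
      _ ≤ 2 * s := by omega
  have key := hconc x y h1 h2 h3
  have hnorm : ∀ v : EuclideanSpace ℝ V, ‖v‖ ^ 2 = ∑ a, (v a) ^ 2 := by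
    intro v
    rw [← real_inner_self_eq_norm_sq]
    simp [PiLp.inner_apply, ← sq]
    simp [EuclideanSpace.norm_sq_eq]
  have hinner : ⟪g, y - x⟫ = ∑ a, g a * (y a - x a) := by
    simp [PiLp.inner_apply]
    exact Finset.sum_congr rfl fun i _ => mul_comm _ _
  have main : ⟪g, y - x⟫ - m / 2 * ‖y - x‖ ^ 2 ≤
      1 / (2 * m) * ‖restr g (Zstar \ Z)‖ ^ 2 - m / 2 * ‖restr x (Z \ Zstar)‖ ^ 2 := by
    rw [hinner, hnorm (y - x), hnorm (restr g (Zstar \ Z)), hnorm (restr x (Z \ Zstar))]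
    have hyx : ∀ a : V, (y - x) a = y a - x a := fun a => rfl
    simp only [hyx]
    rw [Finset.mul_sum, Finset.mul_sum, Finset.mul_sum, ← Finset.sum_sub_distrib,
      ← Finset.sum_sub_distrib]
    apply Finset.sum_le_sum
    intro a _
    have r1 : restr g (Zstar \ Z) a = if a ∈ Zstar \ Z then g a else 0 := by
      simp only [restr]
    have r2 : restr x (Z \ Zstar) a = if a ∈ Z \ Zstar then x a else 0 := by
      simp only [restr]
    by_cases haZ : a ∈ Z
    · have hga : g a = 0 := hw_grad Z a haZ
      have r1' : restr g (Zstar \ Z) a = 0 := by rw [r1, if_neg (by simp [haZ])]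
      by_cases haZs : a ∈ Zstar
      · have r2' : restr x (Z \ Zstar) a = 0 := by rw [r2, if_neg (by simp [haZs])]
        rw [r1', r2', hga]
        nlinarith [mul_nonneg hm.le (sq_nonneg (y a - x a))]
      · have hya : y a = 0 := hyZ a haZs
        have r2' : restr x (Z \ Zstar) a = x a := by
          rw [r2, if_pos (by simp [haZ, haZs])]
        rw [r1', r2', hga, hya]
        nlinarith [sq_nonneg (x a)]
    · have hxa : x a = 0 := hxZ a haZ
      have r2' : restr x (Z \ Zstar) a = 0 := by rw [r2, if_neg (by simp [haZ])]
      by_cases haZs : a ∈ Zstar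
      · have r1' : restr g (Zstar \ Z) a = g a := by
          rw [r1, if_pos (by simp [haZ, haZs])]
        rw [r1', r2', hxa]
        have h2m : (0:ℝ) < 2 * m := by linarith
        rw [show 1 / (2 * m) * g a ^ 2 - m / 2 * (0:ℝ) ^ 2 = g a ^ 2 / (2 * m) from by ring,
          le_div_iff₀ h2m]
        nlinarith [sq_nonneg (m * y a - g a)]
      · have hya : y a = 0 := hyZ a haZs
        have r1' : restr g (Zstar \ Z) a = 0 := by rw [r1, if_neg (by simp [haZs])]
        rw [r1', r2', hxa, hya]
        norm_num
  have : u y - u x ≤ ⟪g, y - x⟫ - m / 2 * ‖y - x‖ ^ 2 := by linarith [key]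
  linarith [main, this]
end

section
/- Let m_1 > 0 and suppose u is m_1-strongly concave on Ω_1. Then for every Z ⊆ V: Σ_{a ∈ Z} f({a}) ≤ (1/(2m_1))·‖(∇u(0))_Z‖². -/
open scoped RealInnerProductSpace

/-- if `u` is `m₁`-strongly concave on `Ω_1` then for every `Z`,
`∑_{a ∈ Z} f({a}) ≤ (1/(2 m₁))‖(∇u(0))_Z‖²`. -/
theorem stmt16 {V : Type*} [Fintype V] [DecidableEq V]
    (m1 : ℝ) (hm1 : 0 < m1)
    (u : EuclideanSpace ℝ V → ℝ) (hu : Differentiable ℝ u)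
    (hconc : ∀ x y : EuclideanSpace ℝ V,
      (suppF x).card ≤ 1 → (suppF y).card ≤ 1 → (suppF (x - y)).card ≤ 1 →
      u y - u x - ⟪gradient u x, y - x⟫ ≤ -(m1 / 2) * ‖y - x‖ ^ 2)
    (w : Finset V → EuclideanSpace ℝ V)
    (hw_supp : ∀ Z : Finset V, suppF (w Z) ⊆ Z)
    (hw_max : ∀ Z : Finset V, ∀ z : EuclideanSpace ℝ V, suppF z ⊆ Z → u z ≤ u (w Z))
    (hw_grad : ∀ Z : Finset V, ∀ a ∈ Z, gradient u (w Z) a = 0)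
    (Z : Finset V) :
    ∑ a ∈ Z, (u (w {a}) - u 0) ≤ (1 / (2 * m1)) * ‖restr (gradient u 0) Z‖ ^ 2 := by
  classical
  set g : EuclideanSpace ℝ V := gradient u 0 with hg
  -- pointwise bound
  have key : ∀ a : V, u (w {a}) - u 0 ≤ (1 / (2 * m1)) * (g a) ^ 2 := by
    intro a
    set y : EuclideanSpace ℝ V := w {a} with hy
    have hsupp : suppF y ⊆ {a} := hw_supp {a}
    have hzero : ∀ i : V, i ≠ a → y i = 0 := by
      intro i hi
      by_contra h
      have : i ∈ suppF y := by simp [suppF, h]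
      have := hsupp this
      simp at this
      exact hi this
    have h0 : (suppF (0 : EuclideanSpace ℝ V)).card ≤ 1 := by
      simp [suppF]
    have h1 : (suppF y).card ≤ 1 := by
      calc (suppF y).card ≤ ({a} : Finset V).card := Finset.card_le_card hsupp
        _ = 1 := Finset.card_singleton a
    have h2 : (suppF ((0 : EuclideanSpace ℝ V) - y)).card ≤ 1 := by
      have : suppF ((0 : EuclideanSpace ℝ V) - y) = suppF y := by
        ext i; simp [suppF]
      rw [this]; exact h1
    have hc := hconc 0 y h0 h1 h2
    have hsub : y - 0 = y := sub_zero y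
    rw [hsub] at hc
    have hinner : ⟪g, y⟫ = g a * y a := by
      rw [PiLp.inner_apply]
      rw [Finset.sum_eq_single a]
      · simp [mul_comm]
      · intro i _ hi
        simp [hzero i hi]
      · intro h; exact absurd (Finset.mem_univ a) h
    have hnorm : ‖y‖ ^ 2 = (y a) ^ 2 := by
      rw [← real_inner_self_eq_norm_sq, PiLp.inner_apply]
      rw [Finset.sum_eq_single a]
      · simp [sq]
      · intro i _ hi
        simp [hzero i hi]
      · intro h; exact absurd (Finset.mem_univ a) h
    rw [hinner, hnorm] at hc
    have h2m : (0:ℝ) < 2 * m1 := by linarith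
    have hstep : g a * y a - m1 / 2 * (y a) ^ 2 ≤ (g a) ^ 2 / (2 * m1) := by
      rw [le_div_iff₀ h2m]
      nlinarith [sq_nonneg (m1 * y a - g a)]
    have : (1 / (2 * m1)) * (g a) ^ 2 = (g a) ^ 2 / (2 * m1) := by ring
    rw [this]
    linarith
  calc ∑ a ∈ Z, (u (w {a}) - u 0) ≤ ∑ a ∈ Z, (1 / (2 * m1)) * (g a) ^ 2 :=
        Finset.sum_le_sum fun a _ => key a
    _ = (1 / (2 * m1)) * ‖restr g Z‖ ^ 2 := by
        rw [← Finset.mul_sum]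
        congr 1
        rw [← real_inner_self_eq_norm_sq, PiLp.inner_apply]
        rw [← Finset.sum_subset (Finset.subset_univ Z)]
        · apply Finset.sum_congr rfl
          intro a ha
          simp [restr, ha, sq]
        · intro a _ ha
          simp [restr, ha]
end
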